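/- Let n ≥ 2 and consider the directed cycle C_n on vertices {1,...,n} with edges (k, k+1 mod n). The minrank of C_n over GF(2) is exactly n − 1: the (n−1)-symbol code {x_k + x_{k+1} : k = 1,...,n−1} lets every receiver R_k (demanding x_k, knowing x_{k+1 mod n}) decode, and no matrix fitting C_n has GF(2)-rank less than n − 1. -/

import Mathlib

/-- Standard basis vector over GF(2) for message index `k` (messages indexed by `ZMod K`,
i.e. index arithmetic is modulo `K`). -/
def e (K : ℕ) (k : ZMod K) : ZMod K → ZMod 2 := Pi.single k 1

/-- Receiver `k` can decode its demanded message `x_k`: the demand vector lies in the GF(2)-span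
of the broadcast code symbols `C` together with its side-information messages `side`. -/
def Decodes (K : ℕ) (C : Set (ZMod K → ZMod 2)) (side : Set (ZMod K)) (k : ZMod K) : Prop :=
  e K k ∈ Submodule.span (ZMod 2) (C ∪ e K '' side)

/-- A 0-1 matrix over GF(2) fits the directed graph with edge relation `E`:
unit diagonal, and zero outside the diagonal and edge set. -/
def Fits {V : Type*} (E : V → V → Prop) (A : Matrix V V (ZMod 2)) : Prop :=
  (∀ i, A i i = 1) ∧ ∀ i j, i ≠ j → ¬ E i j → A i j = 0

lemma add_self_vec {K : ℕ} (v : ZMod K → ZMod 2) : v + v = 0 := by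
  funext x
  show v x + v x = 0
  exact CharTwo.add_self_eq_zero _

lemma cast_inj_of_lt {n a b : ℕ} [NeZero n] (ha : a < n) (hb : b < n)
    (h : (a : ZMod n) = (b : ZMod n)) : a = b := by
  have := congrArg ZMod.val h
  rwa [ZMod.val_cast_of_lt ha, ZMod.val_cast_of_lt hb] at this

/-- minrank of the directed `n`-cycle over GF(2) is exactly `n-1`:
the code `{x_k + x_{k+1} : k = 1,...,n-1}` lets every receiver decode, and every fitting
matrix has rank at least `n-1`. -/
theorem stmt12 (n : ℕ) [NeZero n] (hn : 2 ≤ n) :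
    (∀ k : ZMod n,
      Decodes n
        {v | ∃ i : ℕ, 1 ≤ i ∧ i ≤ n - 1 ∧
          v = e n ((i : ℕ) : ZMod n) + e n ((i + 1 : ℕ) : ZMod n)}
        {k + 1} k) ∧
    (∀ A : Matrix (ZMod n) (ZMod n) (ZMod 2),
        Fits (fun i j => j = i + 1) A → n - 1 ≤ A.rank) := by
  constructor
  · -- decoding part
    set C : Set (ZMod n → ZMod 2) :=
      {v | ∃ i : ℕ, 1 ≤ i ∧ i ≤ n - 1 ∧
          v = e n ((i : ℕ) : ZMod n) + e n ((i + 1 : ℕ) : ZMod n)} with hC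
    -- telescoping claim
    have claim : ∀ d m : ℕ, m + d = n → 1 ≤ m →
        e n ((m : ℕ) : ZMod n) + e n ((n : ℕ) : ZMod n) ∈ Submodule.span (ZMod 2) C := by
      intro d
      induction d with
      | zero =>
        intro m hm _
        simp only [Nat.add_zero] at hm
        subst hm
        rw [add_self_vec]
        exact Submodule.zero_mem _
      | succ d ih =>
        intro m hm h1
        have h2 : m ≤ n - 1 := by omega
        have hmem : e n ((m : ℕ) : ZMod n) + e n ((m + 1 : ℕ) : ZMod n) ∈ C :=
          ⟨m, h1, h2, rfl⟩
        have hih := ih (m + 1) (by omega) (by omega)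
        have heq : e n ((m : ℕ) : ZMod n) + e n ((n : ℕ) : ZMod n) =
            (e n ((m : ℕ) : ZMod n) + e n ((m + 1 : ℕ) : ZMod n)) +
            (e n ((m + 1 : ℕ) : ZMod n) + e n ((n : ℕ) : ZMod n)) := by
          have : e n ((m + 1 : ℕ) : ZMod n) + e n ((m + 1 : ℕ) : ZMod n) = 0 :=
            add_self_vec _
          abel_nf
          rw [two_smul, this, add_zero]
        rw [heq]
        exact Submodule.add_mem _ (Submodule.subset_span hmem) hih
    intro k
    unfold Decodes
    have hside : e n (k + 1) ∈ Submodule.span (ZMod 2) (C ∪ e n '' {k + 1}) :=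
      Submodule.subset_span (Or.inr ⟨k + 1, rfl, rfl⟩)
    have hdiff : e n k + e n (k + 1) ∈ Submodule.span (ZMod 2) C := by
      have hk : ((k.val : ℕ) : ZMod n) = k := by
        simp [ZMod.natCast_val, ZMod.cast_id]
      by_cases h0 : k.val = 0
      · -- k = 0, use the telescoping claim with m = 1
        have hk0 : k = 0 := by rw [← hk, h0]; simp
        have h := claim (n - 1) 1 (by omega) le_rfl
        rw [ZMod.natCast_self] at h
        have : e n k + e n (k + 1) = e n ((1 : ℕ) : ZMod n) + e n ((0 : ZMod n)) := by
          rw [hk0]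
          rw [add_comm (e n 0)]
          norm_num
        rw [this]
        exact h
      · -- 1 ≤ k.val, direct code symbol
        have h1 : 1 ≤ k.val := Nat.one_le_iff_ne_zero.mpr h0
        have h2 : k.val ≤ n - 1 := by have := ZMod.val_lt k; omega
        have hmem : e n ((k.val : ℕ) : ZMod n) + e n ((k.val + 1 : ℕ) : ZMod n) ∈ C :=
          ⟨k.val, h1, h2, rfl⟩
        have : e n k + e n (k + 1) =
            e n ((k.val : ℕ) : ZMod n) + e n ((k.val + 1 : ℕ) : ZMod n) := by
          rw [hk]
          push_cast
          rw [hk]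
        rw [this]
        exact Submodule.subset_span hmem
    have hmono : Submodule.span (ZMod 2) C ≤ Submodule.span (ZMod 2) (C ∪ e n '' {k + 1}) :=
      Submodule.span_mono Set.subset_union_left
    have hsum := Submodule.add_mem _ (hmono hdiff) hside
    have : e n k = (e n k + e n (k + 1)) + e n (k + 1) := by
      rw [add_assoc, add_self_vec, add_zero]
    rw [this]
    exact hsum
  · -- rank part
    intro A hA
    classical
    set v : Fin (n - 1) → (ZMod n → ZMod 2) := fun i => A (((i : ℕ) : ZMod n)) with hv
    have hlin : LinearIndependent (ZMod 2) v := by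
      rw [Fintype.linearIndependent_iff]
      intro g hg
      by_contra hne
      push_neg at hne
      obtain ⟨j, hj⟩ := hne
      set S : Finset (Fin (n - 1)) := Finset.univ.filter (fun i => g i ≠ 0) with hS
      have hSne : S.Nonempty := ⟨j, by simp [hS, hj]⟩
      set m := S.min' hSne with hm
      have hmS : m ∈ S := S.min'_mem hSne
      have hgm : g m ≠ 0 := by simpa [hS] using hmS
      have hgfun := congrFun hg (((m : ℕ) : ZMod n))
      rw [Finset.sum_apply] at hgfun
      simp only [Pi.smul_apply, smul_eq_mul, Pi.zero_apply] at hgfun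
      have hsum : ∑ i, g i * v i (((m : ℕ) : ZMod n)) = g m := by
        rw [Finset.sum_eq_single m]
        · rw [hv]
          simp only
          rw [hA.1]
          ring
        · intro i _ him
          by_cases hgi : g i = 0
          · rw [hgi, zero_mul]
          · have hiS : i ∈ S := by simp [hS, hgi]
            have hmi : (m : ℕ) < (i : ℕ) := by
              have := S.min'_le i hiS
              have hne' : m ≠ i := fun h => him h.symm
              exact lt_of_le_of_ne this (fun h => hne' (Fin.ext h))
            have hin : (i : ℕ) < n := by have := i.2; omega
            have hmn : (m : ℕ) < n := by have := m.2; omega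
            have hAz : A (((i : ℕ) : ZMod n)) (((m : ℕ) : ZMod n)) = 0 := by
              apply hA.2
              · intro h
                exact absurd (cast_inj_of_lt hin hmn h) (by omega)
              · intro h
                have : ((m : ℕ) : ZMod n) = (((i : ℕ) + 1 : ℕ) : ZMod n) := by
                  push_cast
                  exact h
                have := cast_inj_of_lt hmn (by omega) this
                omega
            rw [hv]
            simp only
            rw [hAz, mul_zero]
        · intro h
          exact absurd (Finset.mem_univ m) h
      rw [hsum] at hgfun
      exact hgm hgfun
    have hcard : Module.finrank (ZMod 2) (Submodule.span (ZMod 2) (Set.range v)) = n - 1 := by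
      rw [finrank_span_eq_card hlin, Fintype.card_fin]
    have hsub : Set.range v ⊆ Set.range A := fun x ⟨i, hi⟩ => ⟨((i : ℕ) : ZMod n), hi⟩
    have hle : Submodule.span (ZMod 2) (Set.range v) ≤ Submodule.span (ZMod 2) (Set.range A) :=
      Submodule.span_mono hsub
    have := Submodule.finrank_mono hle
    rw [hcard] at this
    rw [Matrix.rank_eq_finrank_span_row]
    exact this
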